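/- For every j with 1 ≤ j ≤ 2n−2 one has 3a_{j+1} − b_{j+1} ≤ 3a_j − b_j; that is, the finite sequence j ↦ 3a_j − b_j, j = 1, …, 2n−1, is monotonically decreasing. -/

import Mathlib

/-- `λ_j = 4 sin²(jπ/(4n))`. -/
noncomputable def lamRR (n j : ℕ) : ℝ :=
  4 * Real.sin ((j : ℝ) * Real.pi / (4 * (n : ℝ))) ^ 2

/-- `λ̃_j = (2/(n+1)) Σ_{i=1}^n sin²(inπ/(n+1)) / (4 sin²(iπ/(2(n+1))) + λ_j)`. -/
noncomputable def lamTildeRR (n j : ℕ) : ℝ :=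
  (2 / ((n : ℝ) + 1)) * ∑ i ∈ Finset.Icc 1 n,
    Real.sin ((i : ℝ) * (n : ℝ) * Real.pi / ((n : ℝ) + 1)) ^ 2 /
      (4 * Real.sin ((i : ℝ) * Real.pi / (2 * ((n : ℝ) + 1))) ^ 2 + lamRR n j)

/-- `a_j = (h - (h/6)λ_j) λ̃_j` with `h = 1/(2n)`. -/
noncomputable def aRR (n j : ℕ) : ℝ :=
  (1 / (2 * (n : ℝ)) - (1 / (2 * (n : ℝ))) / 6 * lamRR n j) * lamTildeRR n j

/-- `b_j = 1 - (1 + λ_j/2) λ̃_j`. -/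
noncomputable def bRR (n j : ℕ) : ℝ :=
  1 - (1 + lamRR n j / 2) * lamTildeRR n j

open Real Finset

lemma key2RR (h s x y : ℝ) (hh : 0 < h) (hs0 : 0 ≤ s) (hs1 : s ≤ 1)
    (hx : 0 < x) (hxy : x ≤ y) :
    (4 + 2*y) * ((1 + 3*h) + (1 - h)/2 * y) / (y^2 + 4*y + 4*s) ≤
    (4 + 2*x) * ((1 + 3*h) + (1 - h)/2 * x) / (x^2 + 4*x + 4*s) := by
  have hy : 0 < y := lt_of_lt_of_le hx hxy
  have hDx : 0 < x^2 + 4*x + 4*s := by positivity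
  have hDy : 0 < y^2 + 4*y + 4*s := by positivity
  rw [div_le_div_iff₀ hDy hDx]
  nlinarith [mul_nonneg (mul_nonneg (sub_nonneg.2 hxy) hh.le) (mul_pos hx hy).le,
    mul_nonneg (mul_nonneg (sub_nonneg.2 hxy) (sub_nonneg.2 hs1)) (by linarith : (0:ℝ) ≤ x + y),
    mul_nonneg (mul_nonneg (sub_nonneg.2 hxy) hh.le) (by linarith : (0:ℝ) ≤ x + y),
    mul_nonneg (mul_nonneg (mul_nonneg (sub_nonneg.2 hxy) hh.le) hs0) (by linarith : (0:ℝ) ≤ x + y),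
    mul_nonneg (sub_nonneg.2 hxy) (sub_nonneg.2 hs1),
    mul_nonneg (mul_nonneg (sub_nonneg.2 hxy) hh.le) (by linarith : (0:ℝ) ≤ 3 - s)]

lemma keyRR (h t x y : ℝ) (hh : 0 < h) (ht0 : 0 ≤ t) (ht1 : t ≤ 1)
    (hx : 0 < x) (hxy : x ≤ y) :
    4*t*(1-t) * ((1 + 3*h) + (1 - h)/2 * y) / (4*t + y) +
      4*t*(1-t) * ((1 + 3*h) + (1 - h)/2 * y) / (4*(1-t) + y) ≤
    4*t*(1-t) * ((1 + 3*h) + (1 - h)/2 * x) / (4*t + x) +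
      4*t*(1-t) * ((1 + 3*h) + (1 - h)/2 * x) / (4*(1-t) + x) := by
  have hy : 0 < y := lt_of_lt_of_le hx hxy
  have hs0 : (0:ℝ) ≤ 4*t*(1-t) := by nlinarith
  have hs1 : 4*t*(1-t) ≤ 1 := by nlinarith [sq_nonneg (2*t - 1)]
  have comb : ∀ l : ℝ, 0 < l →
      4*t*(1-t) * ((1 + 3*h) + (1 - h)/2 * l) / (4*t + l) +
        4*t*(1-t) * ((1 + 3*h) + (1 - h)/2 * l) / (4*(1-t) + l) =
      4*t*(1-t) * ((4 + 2*l) * ((1 + 3*h) + (1 - h)/2 * l) / (l^2 + 4*l + 4*(4*t*(1-t)))) := by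
    intro l hl
    have h1 : (0:ℝ) < 4*t + l := by linarith
    have h2 : (0:ℝ) < 4*(1-t) + l := by linarith
    have h3 : (0:ℝ) < l^2 + 4*l + 4*(4*t*(1-t)) := by nlinarith
    rw [div_add_div _ _ (ne_of_gt h1) (ne_of_gt h2), mul_div_assoc', div_eq_div_iff (mul_pos h1 h2).ne' h3.ne']
    ring
  rw [comb x hx, comb y hy]
  exact mul_le_mul_of_nonneg_left (key2RR h (4*t*(1-t)) x y hh hs0 hs1 hx hxy) hs0

lemma numer_eqRR (n i : ℕ) :
    Real.sin ((i:ℝ) * (n:ℝ) * π / ((n:ℝ) + 1)) ^ 2 = Real.sin ((i:ℝ) * π / ((n:ℝ)+1)) ^ 2 := by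
  have hne : (n:ℝ) + 1 ≠ 0 := by positivity
  have e : (i:ℝ) * (n:ℝ) * π / ((n:ℝ)+1) = (i:ℝ) * π - (i:ℝ) * π / ((n:ℝ)+1) := by
    field_simp; ring
  rw [e, Real.sin_sub, Real.sin_nat_mul_pi]
  have hc : Real.cos ((i:ℝ)*π)^2 = 1 := by
    have := Real.sin_sq_add_cos_sq ((i:ℝ)*π)
    rw [Real.sin_nat_mul_pi] at this; nlinarith
  nlinarith [hc]

lemma double_angleRR (n i : ℕ) :
    Real.sin ((i:ℝ) * π / ((n:ℝ)+1)) ^ 2 =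
      4 * Real.sin ((i:ℝ) * π / (2*((n:ℝ)+1))) ^ 2 *
        (1 - Real.sin ((i:ℝ) * π / (2*((n:ℝ)+1))) ^ 2) := by
  have hne : (n:ℝ) + 1 ≠ 0 := by positivity
  have e : (i:ℝ) * π / ((n:ℝ)+1) = 2 * ((i:ℝ) * π / (2*((n:ℝ)+1))) := by
    field_simp
  rw [e, Real.sin_two_mul]
  have := Real.sin_sq_add_cos_sq ((i:ℝ) * π / (2*((n:ℝ)+1)))
  nlinarith

lemma refl_sRR (n i : ℕ) (hi : i ≤ n) :
    Real.sin (((n+1-i : ℕ):ℝ) * π / ((n:ℝ)+1)) ^ 2 = Real.sin ((i:ℝ) * π / ((n:ℝ)+1)) ^ 2 := by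
  have hc : ((n+1-i : ℕ):ℝ) = (n:ℝ) + 1 - (i:ℝ) := by
    have : i ≤ n + 1 := by omega
    push_cast [Nat.cast_sub this]; ring
  have hne : (n:ℝ) + 1 ≠ 0 := by positivity
  have e : ((n:ℝ) + 1 - (i:ℝ)) * π / ((n:ℝ)+1) = π - (i:ℝ) * π / ((n:ℝ)+1) := by
    field_simp
  rw [hc, e, Real.sin_pi_sub]

lemma refl_tRR (n i : ℕ) (hi : i ≤ n) :
    Real.sin (((n+1-i : ℕ):ℝ) * π / (2*((n:ℝ)+1))) ^ 2 =
      1 - Real.sin ((i:ℝ) * π / (2*((n:ℝ)+1))) ^ 2 := by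
  have hc : ((n+1-i : ℕ):ℝ) = (n:ℝ) + 1 - (i:ℝ) := by
    have : i ≤ n + 1 := by omega
    push_cast [Nat.cast_sub this]; ring
  have hne : (n:ℝ) + 1 ≠ 0 := by positivity
  have e : ((n:ℝ) + 1 - (i:ℝ)) * π / (2*((n:ℝ)+1)) = π/2 - (i:ℝ) * π / (2*((n:ℝ)+1)) := by
    field_simp
  rw [hc, e, Real.sin_pi_div_two_sub, Real.cos_sq']

lemma reflect_sumRR (n : ℕ) (f : ℕ → ℝ) :
    ∑ i ∈ Finset.Icc 1 n, f i = ∑ i ∈ Finset.Icc 1 n, f (n+1-i) := by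
  refine Finset.sum_nbij' (fun i => n+1-i) (fun i => n+1-i) ?_ ?_ ?_ ?_ ?_ <;>
    intro a ha <;> simp only [Finset.mem_Icc] at * <;> first
      | omega
      | exact congrArg f (by omega)

/-- The main summed monotonicity: for `0 < l ≤ m`,
`C(m) * S(m) ≤ C(l) * S(l)` where `C(l) = 1 + 3h + (1-h)/2 l`, `h = 1/(2n)`. -/
lemma main_sumRR (n : ℕ) (hn : 1 ≤ n) (l m : ℝ) (hl : 0 < l) (hlm : l ≤ m) :
    ((1 + 3*(1/(2*(n:ℝ)))) + (1 - 1/(2*(n:ℝ)))/2 * m) *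
      ∑ i ∈ Finset.Icc 1 n, Real.sin ((i:ℝ) * (n:ℝ) * π / ((n:ℝ)+1)) ^ 2 /
        (4 * Real.sin ((i:ℝ) * π / (2*((n:ℝ)+1))) ^ 2 + m) ≤
    ((1 + 3*(1/(2*(n:ℝ)))) + (1 - 1/(2*(n:ℝ)))/2 * l) *
      ∑ i ∈ Finset.Icc 1 n, Real.sin ((i:ℝ) * (n:ℝ) * π / ((n:ℝ)+1)) ^ 2 /
        (4 * Real.sin ((i:ℝ) * π / (2*((n:ℝ)+1))) ^ 2 + l) := by
  have hnR : (0:ℝ) < (n:ℝ) := by exact_mod_cast hn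
  set h : ℝ := 1/(2*(n:ℝ)) with hdef
  have hh : 0 < h := by positivity
  set t : ℕ → ℝ := fun i => Real.sin ((i:ℝ) * π / (2*((n:ℝ)+1))) ^ 2 with htdef
  -- F and F' termwise forms
  have e1 : ∀ l' : ℝ,
      ((1 + 3*h) + (1 - h)/2 * l') *
        ∑ i ∈ Finset.Icc 1 n, Real.sin ((i:ℝ) * (n:ℝ) * π / ((n:ℝ)+1)) ^ 2 /
          (4 * Real.sin ((i:ℝ) * π / (2*((n:ℝ)+1))) ^ 2 + l') =
      ∑ i ∈ Finset.Icc 1 n, 4*(t i)*(1-(t i)) * ((1 + 3*h) + (1 - h)/2 * l') / (4*(t i) + l') := by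
    intro l'
    rw [Finset.mul_sum]
    refine Finset.sum_congr rfl fun i hi => ?_
    rw [numer_eqRR n i, double_angleRR n i]
    simp only [htdef]
    ring
  have e2 : ∀ l' : ℝ,
      ∑ i ∈ Finset.Icc 1 n, 4*(t i)*(1-(t i)) * ((1 + 3*h) + (1 - h)/2 * l') / (4*(t i) + l') =
      ∑ i ∈ Finset.Icc 1 n, 4*(t i)*(1-(t i)) * ((1 + 3*h) + (1 - h)/2 * l') / (4*(1-(t i)) + l') := by
    intro l'
    rw [reflect_sumRR n (fun i => 4*(t i)*(1-(t i)) * ((1 + 3*h) + (1 - h)/2 * l') / (4*(t i) + l'))]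
    refine Finset.sum_congr rfl fun i hi => ?_
    simp only [Finset.mem_Icc] at hi
    simp only [htdef]
    rw [refl_tRR n i hi.2]
    ring
  have step : ∀ i ∈ Finset.Icc 1 n,
      4*(t i)*(1-(t i)) * ((1 + 3*h) + (1 - h)/2 * m) / (4*(t i) + m) +
        4*(t i)*(1-(t i)) * ((1 + 3*h) + (1 - h)/2 * m) / (4*(1-(t i)) + m) ≤
      4*(t i)*(1-(t i)) * ((1 + 3*h) + (1 - h)/2 * l) / (4*(t i) + l) +
        4*(t i)*(1-(t i)) * ((1 + 3*h) + (1 - h)/2 * l) / (4*(1-(t i)) + l) := by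
    intro i _
    exact keyRR h (t i) l m hh (sq_nonneg _) (Real.sin_sq_le_one _) hl hlm
  have hsum := Finset.sum_le_sum step
  rw [Finset.sum_add_distrib, Finset.sum_add_distrib] at hsum
  rw [e1 m, e1 l]
  have em := e2 m
  have el := e2 l
  linarith

theorem three_a_sub_b_decreasing (n : ℕ) (hn : 1 ≤ n)
    (j : ℕ) (hj1 : 1 ≤ j) (hj2 : j ≤ 2 * n - 2) :
    3 * aRR n (j + 1) - bRR n (j + 1) ≤ 3 * aRR n j - bRR n j := by
  have hn2 : 2 ≤ n := by omega
  have hnR : (2:ℝ) ≤ (n:ℝ) := by exact_mod_cast hn2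
  have hπ := Real.pi_pos
  -- lamRR facts
  have hjR : (1:ℝ) ≤ (j:ℝ) := by exact_mod_cast hj1
  have hj2R : (j:ℝ) + 1 ≤ 2*(n:ℝ) - 1 := by
    have : j + 1 ≤ 2*n - 1 := by omega
    have := (Nat.cast_le (α := ℝ)).2 this
    push_cast at this
    have h2n : (1:ℝ) ≤ 2*(n:ℝ) := by linarith
    calc (j:ℝ) + 1 ≤ ((2*n - 1 : ℕ):ℝ) := by push_cast at this ⊢; linarith
      _ = 2*(n:ℝ) - 1 := by
          have : (1:ℕ) ≤ 2*n := by omega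
          push_cast [Nat.cast_sub this]; ring
  have hang1 : 0 < (j:ℝ) * π / (4*(n:ℝ)) := by positivity
  have hang2 : ((j:ℝ)+1) * π / (4*(n:ℝ)) ≤ π/2 := by
    rw [div_le_div_iff₀ (by positivity) (by norm_num : (0:ℝ) < 2)]
    nlinarith
  have hang12 : (j:ℝ) * π / (4*(n:ℝ)) ≤ ((j:ℝ)+1) * π / (4*(n:ℝ)) := by
    apply div_le_div_of_nonneg_right ?_ (by positivity)
    nlinarith
  have hsin1 : 0 < Real.sin ((j:ℝ) * π / (4*(n:ℝ))) := by
    apply Real.sin_pos_of_pos_of_lt_pi hang1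
    calc (j:ℝ) * π / (4*(n:ℝ)) ≤ ((j:ℝ)+1) * π / (4*(n:ℝ)) := hang12
      _ ≤ π/2 := hang2
      _ < π := by linarith
  have hsin12 : Real.sin ((j:ℝ) * π / (4*(n:ℝ))) ≤ Real.sin ((((j+1):ℕ):ℝ) * π / (4*(n:ℝ))) := by
    push_cast
    exact Real.sin_le_sin_of_le_of_le_pi_div_two (by linarith) hang2 hang12
  have hx : 0 < lamRR n j := by
    unfold lamRR; positivity
  have hxy : lamRR n j ≤ lamRR n (j+1) := by
    unfold lamRR
    have h1 : Real.sin ((j:ℝ) * π / (4*(n:ℝ)))^2 ≤ Real.sin ((((j+1):ℕ):ℝ) * π / (4*(n:ℝ)))^2 := by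
      apply pow_le_pow_left₀ hsin1.le hsin12
    linarith
  -- algebraic form
  have form : ∀ k : ℕ, 3 * aRR n k - bRR n k =
      -1 + ((1 + 3*(1/(2*(n:ℝ)))) + (1 - 1/(2*(n:ℝ)))/2 * lamRR n k) * lamTildeRR n k := by
    intro k; unfold aRR bRR; ring
  rw [form j, form (j+1)]
  unfold lamTildeRR
  have key := main_sumRR n hn (lamRR n j) (lamRR n (j+1)) hx hxy
  have h2 : (0:ℝ) ≤ 2/((n:ℝ)+1) := by positivity
  have := mul_le_mul_of_nonneg_left key h2
  nlinarith [this]
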